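/- Let φ = (φ₁,φ₂) : ℝ³ → ℝ² be a C² map and define the force field F : ℝ³ → ℝ³ by Fᵢ = Σⱼ ∂ⱼCᵢⱼ − ½ ∂ᵢ|Dφ|², where C = (Dφ)ᵀ(Dφ) and |Dφ|² = Σ_{a,i}(∂ᵢφₐ)². Then F = (Δφ₁)∇φ₁ + (Δφ₂)∇φ₂ (Δ the componentwise Laplacian), and F is pointwise orthogonal to the associated fluid velocity: ⟨F(x), V(x)⟩ = 0 for all x ∈ ℝ³, where V = ∇φ₁ × ∇φ₂. -/

import Mathlib

open scoped BigOperators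

/-- Partial derivative `∂ⱼ f` of a scalar function on `ℝ³`. -/
noncomputable def pd (j : Fin 3) (f : (Fin 3 → ℝ) → ℝ) (x : Fin 3 → ℝ) : ℝ :=
  fderiv ℝ f x (Pi.single j 1)

/-- Cross product on `ℝ³`. -/
def cross (a b : Fin 3 → ℝ) : Fin 3 → ℝ :=
  ![a 1 * b 2 - a 2 * b 1, a 2 * b 0 - a 0 * b 2, a 0 * b 1 - a 1 * b 0]

/-- Cauchy–Green tensor `Cᵢⱼ = Σₐ ∂ᵢφₐ ∂ⱼφₐ` of a map `φ : ℝ³ → ℝ²`. -/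
noncomputable def CG (φ : Fin 2 → (Fin 3 → ℝ) → ℝ) (i j : Fin 3) (x : Fin 3 → ℝ) : ℝ :=
  ∑ a : Fin 2, pd i (φ a) x * pd j (φ a) x

/-- `|Dφ|² = Σ_{a,i} (∂ᵢφₐ)²`. -/
noncomputable def eDen (φ : Fin 2 → (Fin 3 → ℝ) → ℝ) (x : Fin 3 → ℝ) : ℝ :=
  ∑ a : Fin 2, ∑ i : Fin 3, (pd i (φ a) x) ^ 2

/-- Force field `Fᵢ = Σⱼ ∂ⱼCᵢⱼ − ½ ∂ᵢ|Dφ|²`. -/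
noncomputable def force (φ : Fin 2 → (Fin 3 → ℝ) → ℝ) (i : Fin 3) (x : Fin 3 → ℝ) : ℝ :=
  (∑ j : Fin 3, pd j (fun y => CG φ i j y) x) - (1/2) * pd i (fun y => eDen φ y) x

/-- Fluid velocity `V = ∇φ₁ × ∇φ₂` associated to `φ`. -/
noncomputable def Vfield (φ : Fin 2 → (Fin 3 → ℝ) → ℝ) (x : Fin 3 → ℝ) : Fin 3 → ℝ :=
  cross (fun i => pd i (φ 0) x) (fun i => pd i (φ 1) x)

lemma diff_pd {g : (Fin 3 → ℝ) → ℝ} (hg : ContDiff ℝ 2 g) (i : Fin 3) (x : Fin 3 → ℝ) :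
    DifferentiableAt ℝ (fun y => pd i g y) x := by
  have h1 : DifferentiableAt ℝ (fderiv ℝ g) x :=
    ((hg.fderiv_right (m := 1) (by norm_num)).differentiable one_ne_zero).differentiableAt
  exact h1.clm_apply (differentiableAt_const _)

lemma pd_sum {ι : Type*} (s : Finset ι) (F : ι → (Fin 3 → ℝ) → ℝ) (x : Fin 3 → ℝ) (j : Fin 3)
    (h : ∀ a ∈ s, DifferentiableAt ℝ (F a) x) :
    pd j (fun y => ∑ a ∈ s, F a y) x = ∑ a ∈ s, pd j (F a) x := by
  unfold pd; rw [fderiv_fun_sum h]; simp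

lemma pd_mul (u v : (Fin 3 → ℝ) → ℝ) (x : Fin 3 → ℝ) (j : Fin 3)
    (hu : DifferentiableAt ℝ u x) (hv : DifferentiableAt ℝ v x) :
    pd j (fun y => u y * v y) x = pd j u x * v x + u x * pd j v x := by
  unfold pd; rw [fderiv_fun_mul hu hv]; simp; ring

lemma pd_pd_comm {g : (Fin 3 → ℝ) → ℝ} (hg : ContDiff ℝ 2 g) (i j : Fin 3) (x : Fin 3 → ℝ) :
    pd j (fun y => pd i g y) x = pd i (fun y => pd j g y) x := by
  have hdiff : Differentiable ℝ g := hg.differentiable (by norm_num)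
  have hc : DifferentiableAt ℝ (fderiv ℝ g) x :=
    ((hg.fderiv_right (m := 1) (by norm_num)).differentiable one_ne_zero).differentiableAt
  have key : ∀ v w : Fin 3 → ℝ, fderiv ℝ (fun y => fderiv ℝ g y v) x w
      = fderiv ℝ (fderiv ℝ g) x w v := by
    intro v w
    rw [fderiv_clm_apply hc (differentiableAt_const v)]
    simp
  have symm := second_derivative_symmetric (f' := fderiv ℝ g)
    (fun y => (hdiff y).hasFDerivAt) hc.hasFDerivAt (Pi.single i 1) (Pi.single j 1)
  show fderiv ℝ (fun y => fderiv ℝ g y (Pi.single i 1)) x (Pi.single j 1)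
    = fderiv ℝ (fun y => fderiv ℝ g y (Pi.single j 1)) x (Pi.single i 1)
  rw [key, key, symm]

/-- for a `C²` map `φ : ℝ³ → ℝ²`, the force `F = div C − ½∇|Dφ|²` satisfies
`F = (Δφ₁)∇φ₁ + (Δφ₂)∇φ₂` and is pointwise orthogonal to `V = ∇φ₁ × ∇φ₂`. -/
theorem stmt9 (φ : Fin 2 → (Fin 3 → ℝ) → ℝ) (hφ : ∀ a, ContDiff ℝ 2 (φ a)) :
    (∀ (x : Fin 3 → ℝ) (i : Fin 3),
      force φ i x = ∑ a : Fin 2, (∑ j : Fin 3, pd j (fun y => pd j (φ a) y) x) * pd i (φ a) x) ∧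
    (∀ x : Fin 3 → ℝ, (∑ i, force φ i x * Vfield φ x i) = 0) := by
  have hd : ∀ (a : Fin 2) (i : Fin 3) (x : Fin 3 → ℝ),
      DifferentiableAt ℝ (fun y => pd i (φ a) y) x := fun a i x => diff_pd (hφ a) i x
  have H1 : ∀ (x : Fin 3 → ℝ) (i : Fin 3),
      force φ i x = ∑ a : Fin 2, (∑ j : Fin 3, pd j (fun y => pd j (φ a) y) x) * pd i (φ a) x := by
    intro x i
    have hC : ∀ j : Fin 3, pd j (fun y => CG φ i j y) x
        = ∑ a : Fin 2, (pd j (fun y => pd i (φ a) y) x * pd j (φ a) x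
            + pd i (φ a) x * pd j (fun y => pd j (φ a) y) x) := by
      intro j
      have := pd_sum (Finset.univ : Finset (Fin 2))
        (fun a => fun y => pd i (φ a) y * pd j (φ a) y) x j
        (fun a _ => ((hd a i x).mul (hd a j x)))
      rw [show (fun y => CG φ i j y) = (fun y => ∑ a : Fin 2, pd i (φ a) y * pd j (φ a) y)
        from rfl, this]
      exact Finset.sum_congr rfl fun a _ => pd_mul _ _ x j (hd a i x) (hd a j x)
    have hE : pd i (fun y => eDen φ y) x
        = ∑ a : Fin 2, ∑ k : Fin 3, 2 * pd k (φ a) x * pd k (fun y => pd i (φ a) y) x := by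
      have h1 : (fun y => eDen φ y)
          = (fun y => ∑ a : Fin 2, ∑ k : Fin 3, pd k (φ a) y * pd k (φ a) y) := by
        funext y; unfold eDen; exact Finset.sum_congr rfl fun a _ =>
          Finset.sum_congr rfl fun k _ => sq (pd k (φ a) y)
      rw [h1, pd_sum _ _ x i (fun a _ => DifferentiableAt.fun_sum
        (fun k _ => (hd a k x).fun_mul (hd a k x)))]
      refine Finset.sum_congr rfl fun a _ => ?_
      rw [pd_sum _ _ x i (fun k _ => (hd a k x).fun_mul (hd a k x))]
      refine Finset.sum_congr rfl fun k _ => ?_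
      rw [pd_mul _ _ x i (hd a k x) (hd a k x), pd_pd_comm (hφ a) k i x]
      ring
    unfold force
    simp only [hC, hE]
    simp only [Fin.sum_univ_two, Fin.sum_univ_three]
    ring
  refine ⟨H1, fun x => ?_⟩
  simp only [H1, Vfield, cross]
  simp only [Fin.sum_univ_two, Fin.sum_univ_three, Matrix.cons_val_zero, Matrix.cons_val_one,
    Matrix.head_cons, Matrix.cons_val_two, Matrix.tail_cons]
  ring
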